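/- There exists a Lucas semigroup that is not a local Lucas semigroup. Specifically, L(18, 8, 1/96) equals the additive submonoid ⟨6, 8, 10⟩ of ℕ generated by 6, 8, and 10, yet for all P, Q ∈ ℤ, every prime p, and every integer r, the local Lucas semigroup L(P,Q,p^{−r}) is not equal to ⟨6, 8, 10⟩. -/

import Mathlib

/-- The Lucas sequence `U_n(P,Q)`: `U_0 = 0`, `U_1 = 1`,
`U_{n+2} = P·U_{n+1} − Q·U_n`. -/
def lucasU (P Q : ℤ) : ℕ → ℤ
  | 0 => 0
  | 1 => 1
  | n + 2 => P * lucasU P Q (n + 1) - Q * lucasU P Q n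

/-- The Lucas semigroup `L(P,Q,R) = {n ∈ ℕ : U_n(P,Q)·R ∈ ℤ}`. -/
def lucasSG (P Q : ℤ) (R : ℚ) : Set ℕ :=
  {n : ℕ | ∃ k : ℤ, (lucasU P Q n : ℚ) * R = (k : ℚ)}

/-- The local Lucas semigroup `L(P,Q,p^{-r}) = {n ∈ ℕ : ν_p(U_n) ≥ r}`,
equivalently the set of `n` with `U_n · p^{-r} ∈ ℤ`. -/
def localLucasSG (P Q : ℤ) (p : ℕ) (r : ℤ) : Set ℕ :=
  lucasSG P Q ((p : ℚ) ^ (-r))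

lemma lucasU_add_two (P Q : ℤ) (n : ℕ) :
    lucasU P Q (n + 2) = P * lucasU P Q (n + 1) - Q * lucasU P Q n := rfl

lemma mem_lucasSG_iff_dvd (P Q d : ℤ) (hd : d ≠ 0) (n : ℕ) :
    n ∈ lucasSG P Q ((d : ℚ))⁻¹ ↔ d ∣ lucasU P Q n := by
  have hd' : (d : ℚ) ≠ 0 := by exact_mod_cast hd
  constructor
  · rintro ⟨k, hk⟩
    refine ⟨k, ?_⟩
    field_simp at hk
    exact_mod_cast hk
  · rintro ⟨k, hk⟩
    refine ⟨k, ?_⟩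
    rw [hk]
    push_cast
    field_simp

lemma even_ge6_mem : ∀ n : ℕ, n % 2 = 0 → 6 ≤ n →
    n ∈ AddSubmonoid.closure ({6, 8, 10} : Set ℕ) := by
  intro n
  induction n using Nat.strong_induction_on with
  | _ n ih =>
    intro h2 h6
    rcases Nat.lt_or_ge n 12 with h | h
    · have hn : n = 6 ∨ n = 8 ∨ n = 10 := by omega
      rcases hn with rfl | rfl | rfl <;>
        exact AddSubmonoid.subset_closure (by simp)
    · have e : n = (n - 6) + 6 := by omega
      rw [e]
      exact AddSubmonoid.add_mem _ (ih (n - 6) (by omega) (by omega) (by omega))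
        (AddSubmonoid.subset_closure (by simp))

lemma mem_closure_681 (n : ℕ) :
    n ∈ AddSubmonoid.closure ({6, 8, 10} : Set ℕ) ↔ n = 0 ∨ (n % 2 = 0 ∧ 6 ≤ n) := by
  constructor
  · intro h
    induction h using AddSubmonoid.closure_induction with
    | mem x hx =>
      rcases hx with h | h | h <;> simp_all
    | zero => omega
    | add a b _ _ ha hb => omega
  · intro h
    rcases h with rfl | ⟨h2, h6⟩
    · exact AddSubmonoid.zero_mem _
    · exact even_ge6_mem n h2 h6

lemma mod96 : ∀ k : ℕ, (∃ a : ℤ, lucasU 18 8 (6 + 2 * k) = 96 * a) ∧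
    (∃ b : ℤ, lucasU 18 8 (7 + 2 * k) = 96 * b + 64) := by
  intro k
  induction k with
  | zero => exact ⟨⟨17775, by decide⟩, ⟨311844, by decide⟩⟩
  | succ k ih =>
    obtain ⟨⟨a, ha⟩, ⟨b, hb⟩⟩ := ih
    have e7 : 6 + 2 * k + 1 = 7 + 2 * k := by ring
    constructor
    · refine ⟨18 * b - 8 * a + 12, ?_⟩
      have e1 : 6 + 2 * (k + 1) = (6 + 2 * k) + 2 := by ring
      rw [e1, lucasU_add_two, e7, ha, hb]; ring
    · refine ⟨18 * (18 * b - 8 * a + 12) - 8 * b - 6, ?_⟩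
      have e2 : 7 + 2 * (k + 1) = (7 + 2 * k) + 2 := by ring
      have e3 : 7 + 2 * k + 1 = (6 + 2 * k) + 2 := by ring
      rw [e2, lucasU_add_two, e3, lucasU_add_two, e7, ha, hb]; ring

/-- There is a Lucas semigroup that is not a local Lucas semigroup:
`L(18, 8, 1/96) = ⟨6, 8, 10⟩`, yet no local Lucas semigroup `L(P,Q,p^{-r})`
equals `⟨6, 8, 10⟩`. -/
theorem lucasSG_not_local :
    lucasSG 18 8 (1 / 96) =
        (AddSubmonoid.closure ({6, 8, 10} : Set ℕ) : Set ℕ) ∧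
      ∀ (P Q : ℤ) (p : ℕ), p.Prime → ∀ r : ℤ,
        localLucasSG P Q p r ≠
          (AddSubmonoid.closure ({6, 8, 10} : Set ℕ) : Set ℕ) := by
  constructor
  · -- Part 1
    have hL : ∀ n, n ∈ lucasSG 18 8 (1 / 96) ↔ (96 : ℤ) ∣ lucasU 18 8 n := by
      intro n
      have h96 : (1 / 96 : ℚ) = (((96 : ℤ) : ℚ))⁻¹ := by norm_num
      rw [h96]
      exact mem_lucasSG_iff_dvd _ _ _ (by norm_num) n
    ext n
    show n ∈ lucasSG 18 8 (1 / 96) ↔ _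
    rw [hL n, SetLike.mem_coe, mem_closure_681]
    constructor
    · intro hdvd
      rcases Nat.lt_or_ge n 6 with h | h
      · interval_cases n
        · left; rfl
        all_goals (exfalso; norm_num [lucasU] at hdvd)
      · rcases Nat.even_or_odd n with he | ho
        · exact Or.inr ⟨Nat.even_iff.mp he, h⟩
        · exfalso
          obtain ⟨j, hj⟩ : ∃ j, n = 7 + 2 * j := by
            rcases ho with ⟨j, hj⟩; exact ⟨j - 3, by omega⟩
          obtain ⟨b, hb⟩ := (mod96 j).2
          rw [hj, hb] at hdvd
          omega
    · rintro (rfl | ⟨h2, h6⟩)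
      · decide
      · obtain ⟨j, hj⟩ : ∃ j, n = 6 + 2 * j := ⟨(n - 6) / 2, by omega⟩
        obtain ⟨a, ha⟩ := (mod96 j).1
        rw [hj, ha]
        exact dvd_mul_right 96 a
  · -- Part 2
    intro P Q p hp r h
    have hp' : Prime (p : ℤ) := Nat.prime_iff_prime_int.mp hp
    have hset : ∀ n : ℕ, n ∈ localLucasSG P Q p r ↔ (n = 0 ∨ (n % 2 = 0 ∧ 6 ≤ n)) := by
      intro n
      rw [Set.ext_iff] at h
      rw [show (n ∈ localLucasSG P Q p r) ↔ _ from h n, SetLike.mem_coe, mem_closure_681]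
    rcases le_or_gt r 0 with hr | hr
    · -- r ≤ 0 : everything is in the set, in particular 1
      have h1 : (1 : ℕ) ∈ localLucasSG P Q p r := by
        refine ⟨lucasU P Q 1 * (p : ℤ) ^ (-r).toNat, ?_⟩
        have hz : ((p : ℚ)) ^ (-r) = ((p : ℚ)) ^ ((-r).toNat) := by
          rw [← zpow_natCast, Int.toNat_of_nonneg (by omega)]
        show (lucasU P Q 1 : ℚ) * ((p : ℚ)) ^ (-r) = _
        rw [hz]
        push_cast
        ring
      have := (hset 1).mp h1
      omega
    · -- r ≥ 1
      set m := r.toNat with hm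
      have hm1 : 1 ≤ m := by omega
      have hd0 : ((p : ℤ) ^ m) ≠ 0 := pow_ne_zero _ (by exact_mod_cast hp.pos.ne')
      have hloc : ∀ n, n ∈ localLucasSG P Q p r ↔ (p : ℤ) ^ m ∣ lucasU P Q n := by
        intro n
        have hz : ((p : ℚ)) ^ (-r) = ((((p : ℤ) ^ m : ℤ)) : ℚ)⁻¹ := by
          rw [zpow_neg]
          push_cast
          rw [← zpow_natCast, hm, Int.toNat_of_nonneg (le_of_lt hr)]
        show (n ∈ lucasSG P Q ((p : ℚ) ^ (-r))) ↔ _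
        rw [hz]
        exact mem_lucasSG_iff_dvd _ _ _ hd0 n
      have key : ∀ n, (p : ℤ) ^ m ∣ lucasU P Q n ↔ (n = 0 ∨ (n % 2 = 0 ∧ 6 ≤ n)) :=
        fun n => (hloc n).symm.trans (hset n)
      have h6 : (p : ℤ) ^ m ∣ lucasU P Q 6 := (key 6).mpr (by omega)
      have h8 : (p : ℤ) ^ m ∣ lucasU P Q 8 := (key 8).mpr (by omega)
      have hn2 : ¬ (p : ℤ) ^ m ∣ lucasU P Q 2 := fun hc => by have := (key 2).mp hc; omega
      have hn3 : ¬ (p : ℤ) ^ m ∣ lucasU P Q 3 := fun hc => by have := (key 3).mp hc; omega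
      have hn4 : ¬ (p : ℤ) ^ m ∣ lucasU P Q 4 := fun hc => by have := (key 4).mp hc; omega
      have u2 : lucasU P Q 2 = P := by simp [lucasU]
      have u3 : lucasU P Q 3 = P ^ 2 - Q := by simp [lucasU]; ring
      have u4 : lucasU P Q 4 = P ^ 3 - 2 * P * Q := by simp [lucasU]; ring
      have u6 : lucasU P Q 6 = P ^ 5 - 4 * P ^ 3 * Q + 3 * P * Q ^ 2 := by simp [lucasU]; ring
      have u7 : lucasU P Q 7 = P ^ 6 - 5 * P ^ 4 * Q + 6 * P ^ 2 * Q ^ 2 - Q ^ 3 := by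
        simp [lucasU]; ring
      have u8 : lucasU P Q 8 = P ^ 7 - 6 * P ^ 5 * Q + 10 * P ^ 3 * Q ^ 2 - 4 * P * Q ^ 3 := by
        simp [lucasU]; ring
      by_cases hQ : (p : ℤ) ∣ Q
      · -- p ∣ Q : then p ∣ P, so valuations grow and a big odd index is in the set
        have hpU6 : (p : ℤ) ∣ lucasU P Q 6 := dvd_trans (dvd_pow_self _ (by omega)) h6
        have hP : (p : ℤ) ∣ P := by
          have h5 : (p : ℤ) ∣ P ^ 5 := by
            have e : P ^ 5 = lucasU P Q 6 + Q * (4 * P ^ 3 - 3 * P * Q) := by rw [u6]; ring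
            rw [e]
            exact dvd_add hpU6 (hQ.mul_right _)
          exact hp'.dvd_of_dvd_pow h5
        have grow : ∀ k : ℕ, (p : ℤ) ^ k ∣ lucasU P Q (2 * k + 1) ∧
            (p : ℤ) ^ k ∣ lucasU P Q (2 * k + 2) := by
          intro k
          induction k with
          | zero => simp
          | succ k ih =>
            have step1 : (p : ℤ) ^ (k + 1) ∣ lucasU P Q ((2 * k + 1) + 2) := by
              rw [lucasU_add_two, show 2 * k + 1 + 1 = 2 * k + 2 from by ring]
              exact dvd_sub (by rw [pow_succ']; exact mul_dvd_mul hP ih.2)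
                (by rw [pow_succ']; exact mul_dvd_mul hQ ih.1)
            constructor
            · rw [show 2 * (k + 1) + 1 = (2 * k + 1) + 2 from by ring]; exact step1
            · rw [show 2 * (k + 1) + 2 = (2 * k + 2) + 2 from by ring, lucasU_add_two,
                show 2 * k + 2 + 1 = (2 * k + 1) + 2 from by ring]
              exact dvd_sub (step1.mul_left P)
                (by rw [pow_succ']; exact mul_dvd_mul hQ ih.2)
        have hodd := (key (2 * m + 1)).mp (grow m).1
        omega
      · -- p ∤ Q
        have hV3 : (p : ℤ) ∣ (P ^ 3 - 3 * P * Q) := by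
          by_contra hc
          refine hn3 (hp'.pow_dvd_of_dvd_mul_right m hc ?_)
          have e : lucasU P Q 3 * (P ^ 3 - 3 * P * Q) = lucasU P Q 6 := by rw [u3, u6]; ring
          rw [e]; exact h6
        have hV4 : (p : ℤ) ∣ (P ^ 4 - 4 * P ^ 2 * Q + 2 * Q ^ 2) := by
          by_contra hc
          refine hn4 (hp'.pow_dvd_of_dvd_mul_right m hc ?_)
          have e : lucasU P Q 4 * (P ^ 4 - 4 * P ^ 2 * Q + 2 * Q ^ 2) = lucasU P Q 8 := by
            rw [u4, u8]; ring
          rw [e]; exact h8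
        have hV2 : (p : ℤ) ∣ (P ^ 2 - 2 * Q) := by
          have h1 : (p : ℤ) ∣ Q * (P ^ 2 - 2 * Q) := by
            have e : Q * (P ^ 2 - 2 * Q) =
                P * (P ^ 3 - 3 * P * Q) - (P ^ 4 - 4 * P ^ 2 * Q + 2 * Q ^ 2) := by ring
            rw [e]; exact dvd_sub (hV3.mul_left P) hV4
          exact (hp'.dvd_mul.mp h1).resolve_left hQ
        have hP : (p : ℤ) ∣ P := by
          have h1 : (p : ℤ) ∣ P * Q := by
            have e : P * Q = P * (P ^ 2 - 2 * Q) - (P ^ 3 - 3 * P * Q) := by ring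
            rw [e]; exact dvd_sub (hV2.mul_left P) hV3
          exact (hp'.dvd_mul.mp h1).resolve_right hQ
        have hU7 : ¬ (p : ℤ) ∣ lucasU P Q 7 := by
          intro hc
          have hq3 : (p : ℤ) ∣ Q ^ 3 := by
            have e : Q ^ 3 = (P ^ 5 - 5 * P ^ 3 * Q + 6 * P * Q ^ 2) * P - lucasU P Q 7 := by
              rw [u7]; ring
            rw [e]; exact dvd_sub (hP.mul_left _) hc
          exact hQ (hp'.dvd_of_dvd_pow hq3)
        have hPU7 : (p : ℤ) ^ m ∣ P * lucasU P Q 7 := by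
          have e : P * lucasU P Q 7 = lucasU P Q 8 + Q * lucasU P Q 6 := by
            rw [u6, u7, u8]; ring
          rw [e]; exact dvd_add h8 (h6.mul_left Q)
        have hfin := hp'.pow_dvd_of_dvd_mul_right m hU7 hPU7
        exact hn2 (by rw [u2]; exact hfin)
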